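/- Let 0 < δ < α < 1 and n ≥ 1 with k := ⌈(n+1)(1-α+δ)⌉ ≤ n. Let S_1, …, S_n, S' be real random variables whose joint law is exchangeable, and let s̃_1, …, s̃_n be real random variables on the same probability space such that P(S_i ≤ s̃_i for every i ∈ {1, …, n}) ≥ 1 - δ. Let s* be the k-th order statistic of (s̃_1, …, s̃_n). Then P(S' ≤ s*) ≥ 1 - α. -/

import Mathlib

open MeasureTheory

/-- The `k`-th order statistic (1-indexed, counting multiplicity) of a tuple of reals,
with junk value `0` if `k` is out of range. -/
noncomputable def orderStat {n : ℕ} (p : Fin n → ℝ) (k : ℕ) : ℝ :=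
  (Multiset.sort (Multiset.map p Finset.univ.val) (· ≤ ·)).getD (k - 1) 0

lemma aux_ge {l : List ℝ} (hl : l.Pairwise (· ≤ ·)) {p : ℝ → Bool}
    (hp : ∀ a b : ℝ, a ≤ b → p b → p a) {j : ℕ} (hj : j < l.length)
    (h : p l[j]) : j + 1 ≤ l.countP p := by
  have h1 : l.countP p = (l.take (j+1)).countP p + (l.drop (j+1)).countP p := by
    rw [← List.countP_append, List.take_append_drop]
  have h2 : (l.take (j+1)).countP p = (l.take (j+1)).length := by
    rw [List.countP_eq_length]
    intro a ha
    obtain ⟨i, hi, rfl⟩ := List.mem_iff_getElem.mp ha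
    rw [List.getElem_take]
    have hil : i < l.length := by
      have := hi; rw [List.length_take] at this; omega
    have hij : i ≤ j := by
      have := hi; rw [List.length_take] at this; omega
    exact hp _ _ (hl.rel_get_of_le (a := ⟨i, hil⟩) (b := ⟨j, hj⟩) hij) h
  have h3 : (l.take (j+1)).length = j + 1 := by rw [List.length_take]; omega
  omega

lemma aux_le {l : List ℝ} (hl : l.Pairwise (· ≤ ·)) {p : ℝ → Bool}
    (hp : ∀ a b : ℝ, a ≤ b → p b → p a) {j : ℕ} (hj : j < l.length)
    (h : ¬ p l[j]) : l.countP p ≤ j := by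
  have h1 : l.countP p = (l.take j).countP p + (l.drop j).countP p := by
    rw [← List.countP_append, List.take_append_drop]
  have h2 : (l.drop j).countP p = 0 := by
    rw [List.countP_eq_zero]
    intro a ha
    obtain ⟨i, hi, rfl⟩ := List.mem_iff_getElem.mp ha
    rw [List.getElem_drop]
    have hil : j + i < l.length := by
      have := hi; rw [List.length_drop] at this; omega
    intro hpa
    exact h (hp _ _ (hl.rel_get_of_le (a := ⟨j, hj⟩) (b := ⟨j + i, hil⟩) (by simp)) hpa)
  have h3 : (l.take j).countP p ≤ (l.take j).length := List.countP_le_length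
  have h4 : (l.take j).length ≤ j := by rw [List.length_take]; omega
  omega

lemma countP_sort {n : ℕ} (p : Fin n → ℝ) (q : ℝ → Prop) [DecidablePred q] :
    (Multiset.sort (Multiset.map p Finset.univ.val) (· ≤ ·)).countP (fun b => decide (q b))
      = (Finset.univ.filter (fun i => q (p i))).card := by
  rw [← Multiset.coe_countP, Multiset.sort_eq, Multiset.countP_map]
  rfl

lemma orderStat_le_iff {n : ℕ} (p : Fin n → ℝ) {k : ℕ} (hk1 : 1 ≤ k) (hkn : k ≤ n) (y : ℝ) :
    orderStat p k ≤ y ↔ k ≤ (Finset.univ.filter (fun i => p i ≤ y)).card := by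
  classical
  set l := Multiset.sort (Multiset.map p Finset.univ.val) (· ≤ ·) with hldef
  have hlen : l.length = n := by rw [hldef, Multiset.length_sort]; simp
  have hj : k - 1 < l.length := by omega
  have hsort : l.Pairwise (· ≤ ·) := Multiset.pairwise_sort _ _
  have hget : orderStat p k = l[k-1] := List.getD_eq_getElem l 0 hj
  have hcount : l.countP (fun b => decide (b ≤ y)) = (Finset.univ.filter (fun i => p i ≤ y)).card :=
    countP_sort p _
  have hdc : ∀ a b : ℝ, a ≤ b → (decide (b ≤ y) = true) → (decide (a ≤ y) = true) := by
    intro a b hab hb; simp at hb ⊢; exact hab.trans hb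
  constructor
  · intro h
    have := aux_ge hsort hdc hj (by simp only [decide_eq_true_eq]; rw [← hget]; exact h)
    omega
  · intro h
    by_contra hc
    push_neg at hc
    have := aux_le hsort hdc hj (by simp only [decide_eq_true_eq]; rw [← hget]; exact not_le.mpr hc)
    omega

lemma le_orderStat_iff {n : ℕ} (p : Fin n → ℝ) {k : ℕ} (hk1 : 1 ≤ k) (hkn : k ≤ n) (x : ℝ) :
    x ≤ orderStat p k ↔ (Finset.univ.filter (fun i => p i < x)).card < k := by
  classical
  set l := Multiset.sort (Multiset.map p Finset.univ.val) (· ≤ ·) with hldef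
  have hlen : l.length = n := by rw [hldef, Multiset.length_sort]; simp
  have hj : k - 1 < l.length := by omega
  have hsort : l.Pairwise (· ≤ ·) := Multiset.pairwise_sort _ _
  have hget : orderStat p k = l[k-1] := List.getD_eq_getElem l 0 hj
  have hcount : l.countP (fun b => decide (b < x)) = (Finset.univ.filter (fun i => p i < x)).card :=
    countP_sort p _
  have hdc : ∀ a b : ℝ, a ≤ b → (decide (b < x) = true) → (decide (a < x) = true) := by
    intro a b hab hb; simp at hb ⊢; exact hab.trans_lt hb
  constructor
  · intro h
    have := aux_le hsort hdc hj (by simp only [decide_eq_true_eq]; rw [← hget]; exact not_lt.mpr h)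
    omega
  · intro h
    by_contra hc
    push_neg at hc
    have := aux_ge hsort hdc hj (by simp only [decide_eq_true_eq]; rw [← hget]; exact hc)
    omega

lemma orderStat_mono {n : ℕ} {p q : Fin n → ℝ} (h : ∀ i, p i ≤ q i) {k : ℕ}
    (hk1 : 1 ≤ k) (hkn : k ≤ n) : orderStat p k ≤ orderStat q k := by
  classical
  rw [orderStat_le_iff p hk1 hkn]
  have h1 : k ≤ (Finset.univ.filter (fun i => q i ≤ orderStat q k)).card :=
    (orderStat_le_iff q hk1 hkn _).mp le_rfl
  refine h1.trans (Finset.card_le_card ?_)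
  intro i hi
  simp only [Finset.mem_filter, Finset.mem_univ, true_and] at hi ⊢
  exact (h i).trans hi

lemma rank_lemma {m : ℕ} (y : Fin m → ℝ) {k : ℕ} (hk1 : 1 ≤ k) (hkm : k ≤ m) :
    k ≤ (Finset.univ.filter
      (fun j => (Finset.univ.filter (fun i => y i < y j)).card < k)).card := by
  classical
  have h1 : k ≤ (Finset.univ.filter (fun j => y j ≤ orderStat y k)).card :=
    (orderStat_le_iff y hk1 hkm _).mp le_rfl
  refine h1.trans (Finset.card_le_card ?_)
  intro j hj
  simp only [Finset.mem_filter, Finset.mem_univ, true_and] at hj ⊢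
  have h2 : (Finset.univ.filter (fun i => y i < y j)).card
      ≤ (Finset.univ.filter (fun i => y i < orderStat y k)).card := by
    apply Finset.card_le_card
    intro i hi
    simp only [Finset.mem_filter, Finset.mem_univ, true_and] at hi ⊢
    exact hi.trans_le hj
  have h3 : (Finset.univ.filter (fun i => y i < orderStat y k)).card < k :=
    (le_orderStat_iff y hk1 hkm _).mp le_rfl
  omega

lemma card_filter_perm {m : ℕ} (e : Equiv.Perm (Fin m)) (P : Fin m → Prop) [DecidablePred P] :
    (Finset.univ.filter (fun i => P (e i))).card = (Finset.univ.filter P).card := by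
  apply Finset.card_bij (fun i _ => e i)
  · intro a ha; simp only [Finset.mem_filter, Finset.mem_univ, true_and] at ha ⊢; exact ha
  · intro a _ b _ hab; exact e.injective hab
  · intro b hb
    refine ⟨e.symm b, ?_, by simp⟩
    simp only [Finset.mem_filter, Finset.mem_univ, true_and] at hb ⊢
    simpa using hb


/-- Validity of TCPR: if `S_1, …, S_n, S'` (encoded as the coordinates of
`Y : Ω → Fin (n+1) → ℝ`, with `S'` the last coordinate) are exchangeable, the proxy
scores `s̃_i` satisfy `P(∀ i, S_i ≤ s̃_i) ≥ 1 - δ`, and `s*` is the `k`-th order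
statistic of `(s̃_1, …, s̃_n)` with `k = ⌈(n+1)(1-α+δ)⌉ ≤ n`, then
`P(S' ≤ s*) ≥ 1 - α`. -/
theorem stmt10 (n : ℕ) (hn : 1 ≤ n) (α δ : ℝ) (hδ0 : 0 < δ) (hδα : δ < α) (hα1 : α < 1)
    (k : ℕ) (hk : k = ⌈((n : ℝ) + 1) * (1 - α + δ)⌉₊) (hkn : k ≤ n)
    {Ω : Type*} [MeasurableSpace Ω] (μ : Measure Ω) [IsProbabilityMeasure μ]
    (Y : Ω → Fin (n + 1) → ℝ) (hY : Measurable Y)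
    (hexch : ∀ π : Equiv.Perm (Fin (n + 1)),
      Measure.map (fun ω i => Y ω (π i)) μ = Measure.map Y μ)
    (stilde : Ω → Fin n → ℝ) (hstilde : Measurable stilde)
    (hbound : 1 - δ
      ≤ (μ {ω | ∀ i : Fin n, Y ω (Fin.castSucc i) ≤ stilde ω i}).toReal) :
    1 - α ≤ (μ {ω | Y ω (Fin.last n) ≤ orderStat (stilde ω) k}).toReal := by
  classical
  have hαδ : 0 < 1 - α + δ := by linarith
  have hk1 : 1 ≤ k := by
    rw [hk]
    exact Nat.ceil_pos.mpr (by positivity)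
  have hkreal : ((n : ℝ) + 1) * (1 - α + δ) ≤ (k : ℝ) := by
    rw [hk]; exact Nat.le_ceil _
  -- the rank function and events
  set g : Fin (n + 1) → (Fin (n + 1) → ℝ) → ℕ :=
    fun j y => (Finset.univ.filter (fun i => y i < y j)).card with hgdef
  have hgmeas : ∀ j, Measurable (g j) := by
    intro j
    have : g j = fun y => ∑ i : Fin (n + 1), if y i < y j then 1 else 0 := by
      funext y; rw [hgdef]; exact Finset.card_filter _ _
    rw [this]
    exact Finset.measurable_sum _ fun i _ =>
      Measurable.ite (measurableSet_lt (measurable_pi_apply i) (measurable_pi_apply j))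
        measurable_const measurable_const
  set B : Fin (n + 1) → Set (Fin (n + 1) → ℝ) := fun j => {y | g j y < k} with hBdef
  have hBmeas : ∀ j, MeasurableSet (B j) := by
    intro j
    have : B j = g j ⁻¹' (Set.Iio k) := rfl
    rw [this]
    exact (hgmeas j) MeasurableSpace.measurableSet_top
  set E : Fin (n + 1) → Set Ω := fun j => Y ⁻¹' B j with hEdef
  have hEmeas : ∀ j, MeasurableSet (E j) := fun j => hY (hBmeas j)
  -- equal measures via exchangeability
  have key : ∀ j : Fin (n + 1), μ (E j) = μ (E (Fin.last n)) := by
    intro j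
    set π : Equiv.Perm (Fin (n + 1)) := Equiv.swap (Fin.last n) j with hπ
    have hYπ : Measurable (fun ω i => Y ω (π i)) :=
      measurable_pi_lambda _ fun i => (measurable_pi_apply (π i)).comp hY
    have h1 : Measure.map (fun ω i => Y ω (π i)) μ (B (Fin.last n))
        = Measure.map Y μ (B (Fin.last n)) := by rw [hexch π]
    rw [Measure.map_apply hYπ (hBmeas _), Measure.map_apply hY (hBmeas _)] at h1
    have h2 : (fun ω i => Y ω (π i)) ⁻¹' B (Fin.last n) = E j := by
      ext ω
      have hπl : π (Fin.last n) = j := Equiv.swap_apply_left _ _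
      simp only [Set.mem_preimage, hBdef, Set.mem_setOf_eq, hEdef, hgdef, hπl]
      rw [card_filter_perm π (fun i => Y ω i < Y ω j)]
    rw [h2] at h1
    rw [← h1]
  -- pointwise count bound
  have hptwise : ∀ ω, (k : ENNReal) ≤ ∑ j : Fin (n + 1), (E j).indicator (1 : Ω → ENNReal) ω := by
    intro ω
    have h1 : ∑ j : Fin (n + 1), (E j).indicator (1 : Ω → ENNReal) ω
        = ((Finset.univ.filter
          (fun j : Fin (n + 1) => (Finset.univ.filter (fun i => Y ω i < Y ω j)).card < k)).card
            : ENNReal) := by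
      rw [← Finset.sum_boole]
      refine Finset.sum_congr rfl fun j _ => ?_
      by_cases h : (Finset.univ.filter (fun i => Y ω i < Y ω j)).card < k
      · have hmem : ω ∈ E j := h
        simp [Set.indicator_apply, hmem, h]
      · have hmem : ω ∉ E j := h
        simp [Set.indicator_apply, hmem, h]
    rw [h1]
    exact_mod_cast rank_lemma (Y ω) hk1 (hkn.trans (Nat.le_succ n))
  -- sum bound
  have hsum : (k : ENNReal) ≤ (n + 1) * μ (E (Fin.last n)) := by
    calc (k : ENNReal) = ∫⁻ _, (k : ENNReal) ∂μ := by simp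
      _ ≤ ∫⁻ ω, ∑ j : Fin (n + 1), (E j).indicator (1 : Ω → ENNReal) ω ∂μ :=
          lintegral_mono fun ω => hptwise ω
      _ = ∑ j : Fin (n + 1), ∫⁻ ω, (E j).indicator (1 : Ω → ENNReal) ω ∂μ :=
          lintegral_finset_sum _ fun j _ => measurable_one.indicator (hEmeas j)
      _ = ∑ j : Fin (n + 1), μ (E j) := by
          refine Finset.sum_congr rfl fun j _ => ?_
          exact lintegral_indicator_one (hEmeas j)
      _ = ∑ _j : Fin (n + 1), μ (E (Fin.last n)) := Finset.sum_congr rfl fun j _ => key j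
      _ = (n + 1) * μ (E (Fin.last n)) := by
          rw [Finset.sum_const, Finset.card_univ, Fintype.card_fin, nsmul_eq_mul]
          push_cast
          ring
  -- real-valued bound on e
  have hElast_fin : μ (E (Fin.last n)) ≠ ⊤ := measure_ne_top μ _
  set e : ℝ := (μ (E (Fin.last n))).toReal with hedef
  have he1 : (k : ℝ) ≤ ((n : ℝ) + 1) * e := by
    have := ENNReal.toReal_mono (by finiteness) hsum
    rw [ENNReal.toReal_mul] at this
    have h2 : ((n : ENNReal) + 1).toReal = (n : ℝ) + 1 := by
      rw [ENNReal.toReal_add (by simp) (by simp)]; simp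
    rw [h2] at this
    exact this
  have he2 : 1 - α + δ ≤ e := by
    have hpos : (0 : ℝ) < (n : ℝ) + 1 := by positivity
    nlinarith
  -- final combination
  set A : Set Ω := {ω | ∀ i : Fin n, Y ω (Fin.castSucc i) ≤ stilde ω i} with hAdef
  have hAmeas : MeasurableSet A := by
    have : A = ⋂ i : Fin n, {ω | Y ω (Fin.castSucc i) ≤ stilde ω i} := by
      ext ω; simp [hAdef, Set.mem_iInter]
    rw [this]
    exact MeasurableSet.iInter fun i =>
      measurableSet_le ((measurable_pi_apply _).comp hY) ((measurable_pi_apply _).comp hstilde)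
  set F : Set Ω := {ω | Y ω (Fin.last n) ≤ orderStat (stilde ω) k} with hFdef
  have hsub : A ∩ E (Fin.last n) ⊆ F := by
    rintro ω ⟨hωA, hωE⟩
    have hωE' : (Finset.univ.filter (fun i : Fin (n + 1) => Y ω i < Y ω (Fin.last n))).card < k := hωE
    have hcard : (Finset.univ.filter
          (fun i : Fin n => Y ω (Fin.castSucc i) < Y ω (Fin.last n))).card
        ≤ (Finset.univ.filter (fun i : Fin (n + 1) => Y ω i < Y ω (Fin.last n))).card := by
      apply Finset.card_le_card_of_injOn (fun i => Fin.castSucc i)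
      · intro a ha
        simp only [Finset.coe_filter, Set.mem_setOf_eq, Finset.mem_filter, Finset.mem_univ, true_and] at ha ⊢
        exact ha
      · intro a _ b _ hab
        exact Fin.castSucc_injective n hab
    have h4 : Y ω (Fin.last n) ≤ orderStat (fun i : Fin n => Y ω (Fin.castSucc i)) k :=
      (le_orderStat_iff _ hk1 hkn _).mpr (lt_of_le_of_lt hcard hωE')
    have h5 : orderStat (fun i : Fin n => Y ω (Fin.castSucc i)) k ≤ orderStat (stilde ω) k :=
      orderStat_mono (fun i => hωA i) hk1 hkn
    exact h4.trans h5
  have hie : μ (A ∪ E (Fin.last n)) + μ (A ∩ E (Fin.last n)) = μ A + μ (E (Fin.last n)) :=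
    measure_union_add_inter A (hEmeas _)
  have hie' : (μ (A ∪ E (Fin.last n))).toReal + (μ (A ∩ E (Fin.last n))).toReal
      = (μ A).toReal + e := by
    rw [← ENNReal.toReal_add (measure_ne_top μ _) (measure_ne_top μ _),
      ← ENNReal.toReal_add (measure_ne_top μ _) (measure_ne_top μ _), hie]
  have hu : (μ (A ∪ E (Fin.last n))).toReal ≤ 1 := by
    have := ENNReal.toReal_mono ENNReal.one_ne_top (prob_le_one (μ := μ) (s := A ∪ E (Fin.last n)))
    simpa using this
  have hF : (μ (A ∩ E (Fin.last n))).toReal ≤ (μ F).toReal :=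
    ENNReal.toReal_mono (measure_ne_top μ _) (measure_mono hsub)
  have ha : 1 - δ ≤ (μ A).toReal := hbound
  linarith
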